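/- Let Θ : ℝ → (0,∞) be a C¹ even function satisfying lim_{v→±∞} |v|Θ(v) = 1 and let β ∈ (1,5). Define s(v) = ∫_0^v Θ(u)^{-β} du, which is a strictly increasing bijection of ℝ, let s^{-1} be its inverse and ψ = s' ∘ s^{-1}. Then lim_{w→+∞} s^{-1}(w)/w^{1/(β+1)} = (β+1)^{1/(β+1)} and lim_{w→+∞} ψ(w)/w^{β/(β+1)} = (β+1)^{β/(β+1)}. -/

import Mathlib

open MeasureTheory Filter Topology intervalIntegral Set

theorem aux_ratio (β : ℝ) (hβ1 : 1 < β)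
    (Θ : ℝ → ℝ) (hΘpos : ∀ v, 0 < Θ v) (hΘc : Continuous Θ)
    (hΘtop : Tendsto (fun v : ℝ => |v| * Θ v) atTop (𝓝 1))
    (s : ℝ → ℝ) (hs : ∀ v, s v = ∫ u in (0 : ℝ)..v, (Θ u) ^ (-β)) :
    Tendsto (fun v => s v / v ^ (β + 1)) atTop (𝓝 ((β + 1)⁻¹)) := by
  have hβ0 : (0:ℝ) < β := by linarith
  have hp : (0:ℝ) < β + 1 := by linarith
  have hf : Continuous (fun u : ℝ => Θ u ^ (-β)) :=
    hΘc.rpow_const (fun x => Or.inl (hΘpos x).ne')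
  have hg : Continuous (fun u : ℝ => u ^ β) := by
    rw [continuous_iff_continuousAt]
    intro x
    exact Real.continuousAt_rpow_const x β (Or.inr hβ0.le)
  -- key sandwich
  have key : ∀ ε ∈ Ioo (0:ℝ) 1, ∃ M : ℝ, 1 ≤ M ∧ ∀ v, M ≤ v →
      s M + (1+ε) ^ (-β) * ((v ^ (β+1) - M ^ (β+1)) / (β+1)) ≤ s v ∧
      s v ≤ s M + (1-ε) ^ (-β) * ((v ^ (β+1) - M ^ (β+1)) / (β+1)) := by
    intro ε hε
    have h1 : ∀ᶠ u in atTop, |(|u| * Θ u) - 1| < ε := by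
      have h := (hΘtop.sub_const 1).norm
      rw [sub_self, norm_zero] at h
      exact (h.eventually_lt_const hε.1).mono (fun u hu => by
        simpa [Real.norm_eq_abs] using hu)
    obtain ⟨M0, hM0⟩ := eventually_atTop.1 h1
    refine ⟨max M0 1, le_max_right _ _, fun v hv => ?_⟩
    set M := max M0 1 with hM
    have hM1 : (1:ℝ) ≤ M := le_max_right _ _
    have hMpos : (0:ℝ) < M := lt_of_lt_of_le one_pos hM1
    -- pointwise bounds on [M, v]
    have hbound : ∀ u ∈ Icc M v,
        (1+ε) ^ (-β) * u ^ β ≤ Θ u ^ (-β) ∧ Θ u ^ (-β) ≤ (1-ε) ^ (-β) * u ^ β := by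
      intro u hu
      have hu0 : 0 < u := lt_of_lt_of_le hMpos hu.1
      have habs := hM0 u (le_trans (le_max_left _ _) hu.1)
      rw [abs_of_pos hu0] at habs
      have hlow : 1 - ε ≤ u * Θ u := by
        have := abs_lt.1 habs; linarith [this.1]
      have hhigh : u * Θ u ≤ 1 + ε := by
        have := abs_lt.1 habs; linarith [this.2]
      have hprod : Θ u ^ (-β) = (u * Θ u) ^ (-β) * u ^ β := by
        rw [Real.mul_rpow hu0.le (hΘpos u).le]
        rw [mul_comm (u ^ (-β)), mul_assoc, ← Real.rpow_add hu0]
        simp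
      have hεpos : (0:ℝ) < 1 - ε := by linarith [hε.2]
      have hub : (u * Θ u) ^ (-β) ≤ (1-ε) ^ (-β) :=
        Real.rpow_le_rpow_of_nonpos hεpos hlow (by linarith)
      have hlb : (1+ε) ^ (-β) ≤ (u * Θ u) ^ (-β) :=
        Real.rpow_le_rpow_of_nonpos (by linarith [hε.1]) hhigh (by linarith)
      have hupow : (0:ℝ) ≤ u ^ β := (Real.rpow_pos_of_pos hu0 β).le
      constructor
      · rw [hprod]; exact mul_le_mul_of_nonneg_right hlb hupow
      · rw [hprod]; exact mul_le_mul_of_nonneg_right hub hupow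
    -- integrals
    have hint : ∀ a b : ℝ, IntervalIntegrable (fun u => Θ u ^ (-β)) volume a b :=
      fun a b => hf.intervalIntegrable a b
    have hsub : s v - s M = ∫ u in M..v, Θ u ^ (-β) := by
      rw [hs, hs]
      exact integral_interval_sub_left (hint 0 v) (hint 0 M)
    have hintg : ∀ c : ℝ, IntervalIntegrable (fun u => c * u ^ β) volume M v :=
      fun c => (continuous_const.mul hg).intervalIntegrable M v
    have hpow : (∫ u in M..v, u ^ β) = (v ^ (β+1) - M ^ (β+1)) / (β+1) :=
      integral_rpow (Or.inl (by linarith))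
    have hup : (∫ u in M..v, Θ u ^ (-β)) ≤ (1-ε) ^ (-β) * ((v ^ (β+1) - M ^ (β+1)) / (β+1)) := by
      calc (∫ u in M..v, Θ u ^ (-β)) ≤ ∫ u in M..v, (1-ε) ^ (-β) * u ^ β :=
            integral_mono_on hv (hint M v) (hintg _) (fun u hu => (hbound u hu).2)
        _ = (1-ε) ^ (-β) * ((v ^ (β+1) - M ^ (β+1)) / (β+1)) := by
            rw [intervalIntegral.integral_const_mul, hpow]
    have hlo : (1+ε) ^ (-β) * ((v ^ (β+1) - M ^ (β+1)) / (β+1)) ≤ ∫ u in M..v, Θ u ^ (-β) := by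
      calc (1+ε) ^ (-β) * ((v ^ (β+1) - M ^ (β+1)) / (β+1))
          = ∫ u in M..v, (1+ε) ^ (-β) * u ^ β := by rw [intervalIntegral.integral_const_mul, hpow]
        _ ≤ ∫ u in M..v, Θ u ^ (-β) :=
            integral_mono_on hv (hintg _) (hint M v) (fun u hu => (hbound u hu).1)
    constructor <;> linarith
  -- conclude via order topology
  rw [tendsto_order]
  constructor
  · -- lower bounds
    intro c hc
    -- choose ε with c < (1+ε)^(-β)/(β+1)
    have hcont : Tendsto (fun ε : ℝ => (1+ε) ^ (-β) / (β+1)) (𝓝[>] 0) (𝓝 ((β+1)⁻¹)) := by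
      have : ContinuousAt (fun ε : ℝ => (1+ε) ^ (-β) / (β+1)) 0 := by
        apply ContinuousAt.div_const
        exact (Real.continuousAt_rpow_const _ _ (Or.inl (by norm_num))).comp
          ((continuous_const.add continuous_id).continuousAt)
      have h0 : (fun ε : ℝ => (1+ε) ^ (-β) / (β+1)) 0 = (β+1)⁻¹ := by
        norm_num [Real.one_rpow]
      exact h0 ▸ this.tendsto.mono_left nhdsWithin_le_nhds
    have hev : ∀ᶠ ε in 𝓝[>] (0:ℝ), c < (1+ε) ^ (-β) / (β+1) :=
      hcont.eventually_const_lt hc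
    have hev2 : ∀ᶠ ε in 𝓝[>] (0:ℝ), ε ∈ Ioo (0:ℝ) 1 :=
      Ioo_mem_nhdsGT_of_mem ⟨le_refl 0, one_pos⟩
    obtain ⟨ε, hcε, hεmem⟩ := (hev.and hev2).exists
    obtain ⟨M, hM1, hMb⟩ := key ε hεmem
    have hlim : Tendsto (fun v : ℝ =>
        (s M - (1+ε) ^ (-β) * (M ^ (β+1) / (β+1))) / v ^ (β+1)
          + (1+ε) ^ (-β) / (β+1)) atTop (𝓝 ((1+ε) ^ (-β) / (β+1))) := by
      have h1 : Tendsto (fun v : ℝ =>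
          (s M - (1+ε) ^ (-β) * (M ^ (β+1) / (β+1))) / v ^ (β+1)) atTop (𝓝 0) :=
        Tendsto.div_atTop tendsto_const_nhds (tendsto_rpow_atTop hp)
      simpa using h1.add_const ((1+ε) ^ (-β) / (β+1))
    filter_upwards [hlim.eventually_const_lt hcε, eventually_ge_atTop M,
      eventually_ge_atTop (1:ℝ)] with v hv1 hv2 hv3
    have hvpow : (0:ℝ) < v ^ (β+1) := Real.rpow_pos_of_pos (by linarith) _
    have hb := (hMb v hv2).1
    have h2 : (s M - (1+ε) ^ (-β) * (M ^ (β+1) / (β+1))) / v ^ (β+1)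
          + (1+ε) ^ (-β) / (β+1)
        = (s M + (1+ε) ^ (-β) * ((v ^ (β+1) - M ^ (β+1)) / (β+1))) / v ^ (β+1) := by
      field_simp
      ring
    rw [h2] at hv1
    exact hv1.trans_le ((div_le_div_iff_of_pos_right hvpow).2 hb)
  · intro c hc
    have hcont : Tendsto (fun ε : ℝ => (1-ε) ^ (-β) / (β+1)) (𝓝[>] 0) (𝓝 ((β+1)⁻¹)) := by
      have : ContinuousAt (fun ε : ℝ => (1-ε) ^ (-β) / (β+1)) 0 := by
        apply ContinuousAt.div_const
        exact (Real.continuousAt_rpow_const _ _ (Or.inl (by norm_num))).comp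
          ((continuous_const.sub continuous_id).continuousAt)
      have h0 : (fun ε : ℝ => (1-ε) ^ (-β) / (β+1)) 0 = (β+1)⁻¹ := by
        norm_num [Real.one_rpow]
      exact h0 ▸ this.tendsto.mono_left nhdsWithin_le_nhds
    have hev : ∀ᶠ ε in 𝓝[>] (0:ℝ), (1-ε) ^ (-β) / (β+1) < c :=
      hcont.eventually_lt_const hc
    have hev2 : ∀ᶠ ε in 𝓝[>] (0:ℝ), ε ∈ Ioo (0:ℝ) 1 :=
      Ioo_mem_nhdsGT_of_mem ⟨le_refl 0, one_pos⟩
    obtain ⟨ε, hcε, hεmem⟩ := (hev.and hev2).exists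
    obtain ⟨M, hM1, hMb⟩ := key ε hεmem
    have hlim : Tendsto (fun v : ℝ =>
        (s M - (1-ε) ^ (-β) * (M ^ (β+1) / (β+1))) / v ^ (β+1)
          + (1-ε) ^ (-β) / (β+1)) atTop (𝓝 ((1-ε) ^ (-β) / (β+1))) := by
      have h1 : Tendsto (fun v : ℝ =>
          (s M - (1-ε) ^ (-β) * (M ^ (β+1) / (β+1))) / v ^ (β+1)) atTop (𝓝 0) :=
        Tendsto.div_atTop tendsto_const_nhds (tendsto_rpow_atTop hp)
      simpa using h1.add_const ((1-ε) ^ (-β) / (β+1))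
    filter_upwards [hlim.eventually_lt_const hcε, eventually_ge_atTop M,
      eventually_ge_atTop (1:ℝ)] with v hv1 hv2 hv3
    have hvpow : (0:ℝ) < v ^ (β+1) := Real.rpow_pos_of_pos (by linarith) _
    have hb := (hMb v hv2).2
    have h2 : (s M - (1-ε) ^ (-β) * (M ^ (β+1) / (β+1))) / v ^ (β+1)
          + (1-ε) ^ (-β) / (β+1)
        = (s M + (1-ε) ^ (-β) * ((v ^ (β+1) - M ^ (β+1)) / (β+1))) / v ^ (β+1) := by
      field_simp
      ring
    rw [h2] at hv1
    exact (((div_le_div_iff_of_pos_right hvpow).2 hb).trans_lt hv1)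


/-- Asymptotics of the inverse scale function `s⁻¹` and of `ψ = s' ∘ s⁻¹`:
`s⁻¹(w)/w^{1/(β+1)} → (β+1)^{1/(β+1)}` and `ψ(w)/w^{β/(β+1)} → (β+1)^{β/(β+1)}`
as `w → +∞`. Here `s'(v) = Θ(v)^{-β}`. -/
theorem stmt7 (β : ℝ) (hβ1 : 1 < β) (hβ5 : β < 5)
    (Θ : ℝ → ℝ) (hΘpos : ∀ v, 0 < Θ v) (hΘC1 : ContDiff ℝ 1 Θ)
    (hΘeven : ∀ v, Θ (-v) = Θ v)
    (hΘtop : Tendsto (fun v : ℝ => |v| * Θ v) atTop (𝓝 1))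
    (hΘbot : Tendsto (fun v : ℝ => |v| * Θ v) atBot (𝓝 1))
    (s : ℝ → ℝ) (hs : ∀ v, s v = ∫ u in (0 : ℝ)..v, (Θ u) ^ (-β))
    (sInv : ℝ → ℝ) (hleft : ∀ v, sInv (s v) = v) (hright : ∀ w, s (sInv w) = w) :
    let ψ : ℝ → ℝ := fun w => (Θ (sInv w)) ^ (-β)
    Tendsto (fun w : ℝ => sInv w / w ^ ((1 : ℝ) / (β + 1))) atTop
      (𝓝 ((β + 1) ^ ((1 : ℝ) / (β + 1)))) ∧
    Tendsto (fun w : ℝ => ψ w / w ^ (β / (β + 1))) atTop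
      (𝓝 ((β + 1) ^ (β / (β + 1)))) := by
  intro ψ
  have hβ0 : (0:ℝ) < β := by linarith
  have hp : (0:ℝ) < β + 1 := by linarith
  have hΘc : Continuous Θ := hΘC1.continuous
  have hf : Continuous (fun u : ℝ => Θ u ^ (-β)) :=
    hΘc.rpow_const (fun x => Or.inl (hΘpos x).ne')
  have hint : ∀ a b : ℝ, IntervalIntegrable (fun u => Θ u ^ (-β)) volume a b :=
    fun a b => hf.intervalIntegrable a b
  have hA : Tendsto (fun v => s v / v ^ (β + 1)) atTop (𝓝 ((β + 1)⁻¹)) :=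
    aux_ratio β hβ1 Θ hΘpos hΘc hΘtop s hs
  -- s is strictly monotone
  have hmono : StrictMono s := by
    intro x y hxy
    have hsub : s y - s x = ∫ u in x..y, Θ u ^ (-β) := by
      rw [hs, hs]
      exact intervalIntegral.integral_interval_sub_left (hint 0 y) (hint 0 x)
    have hpos : 0 < ∫ u in x..y, Θ u ^ (-β) :=
      intervalIntegral.intervalIntegral_pos_of_pos (hint x y)
        (fun u => Real.rpow_pos_of_pos (hΘpos u) _) hxy
    linarith
  -- s tends to infinity
  have hstop : Tendsto s atTop atTop := by
    have h1 : Tendsto (fun v : ℝ => (s v / v ^ (β+1)) * v ^ (β+1)) atTop atTop :=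
      Tendsto.pos_mul_atTop (by positivity) hA (tendsto_rpow_atTop hp)
    refine h1.congr' ?_
    filter_upwards [eventually_gt_atTop (0:ℝ)] with v hv
    rw [div_mul_cancel₀]
    exact (Real.rpow_pos_of_pos hv _).ne'
  -- sInv tends to infinity
  have hsInv : Tendsto sInv atTop atTop := by
    rw [tendsto_atTop]
    intro b
    filter_upwards [eventually_ge_atTop (s b)] with w hw
    have : s b ≤ s (sInv w) := by rw [hright]; exact hw
    exact hmono.le_iff_le.1 this
  -- lemma D
  have hD : Tendsto (fun v => v / (s v) ^ ((1:ℝ) / (β + 1))) atTop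
      (𝓝 ((β + 1) ^ ((1:ℝ) / (β + 1)))) := by
    have h0 : Tendsto (fun v => (s v / v ^ (β+1)) ^ ((1:ℝ)/(β+1))) atTop
        (𝓝 (((β+1):ℝ)⁻¹ ^ ((1:ℝ)/(β+1)))) :=
      hA.rpow_const (Or.inr (by positivity))
    have h1 : Tendsto (fun v => (s v) ^ ((1:ℝ)/(β+1)) / v) atTop
        (𝓝 (((β+1):ℝ)⁻¹ ^ ((1:ℝ)/(β+1)))) := by
      refine h0.congr' ?_
      filter_upwards [eventually_gt_atTop (0:ℝ), hstop.eventually_ge_atTop 0]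
        with v hv hsv
      rw [Real.div_rpow hsv (Real.rpow_pos_of_pos hv _).le,
        ← Real.rpow_mul hv.le, mul_one_div, div_self hp.ne', Real.rpow_one]
    have h2 : Tendsto (fun v => ((s v) ^ ((1:ℝ)/(β+1)) / v)⁻¹) atTop
        (𝓝 ((((β+1):ℝ)⁻¹ ^ ((1:ℝ)/(β+1)))⁻¹)) :=
      h1.inv₀ (by positivity)
    have heq : (((β+1):ℝ)⁻¹ ^ ((1:ℝ)/(β+1)))⁻¹ = (β + 1) ^ ((1:ℝ)/(β+1)) := by
      rw [Real.inv_rpow hp.le, inv_inv]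
    rw [heq] at h2
    refine h2.congr fun v => ?_
    rw [inv_div]
  have goal1 : Tendsto (fun w : ℝ => sInv w / w ^ ((1 : ℝ) / (β + 1))) atTop
      (𝓝 ((β + 1) ^ ((1 : ℝ) / (β + 1)))) := by
    have := hD.comp hsInv
    refine this.congr fun w => ?_
    simp only [Function.comp_apply, hright]
  refine ⟨goal1, ?_⟩
  show Tendsto (fun w : ℝ => Θ (sInv w) ^ (-β) / w ^ (β / (β + 1))) atTop
      (𝓝 ((β + 1) ^ (β / (β + 1))))
  -- second limit
  have h1 : Tendsto (fun w => (sInv w * Θ (sInv w)) ^ (-β)) atTop (𝓝 1) := by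
    have habs : Tendsto (fun w => (|sInv w| * Θ (sInv w)) ^ (-β)) atTop (𝓝 1) := by
      have h2 := (hΘtop.comp hsInv).rpow_const (p := -β) (Or.inl one_ne_zero)
      simpa using h2
    refine habs.congr' ?_
    filter_upwards [hsInv.eventually_ge_atTop 0] with w hw
    rw [abs_of_nonneg hw]
  have h3 : Tendsto (fun w => (sInv w / w ^ ((1:ℝ)/(β+1))) ^ β) atTop
      (𝓝 (((β + 1) ^ ((1:ℝ)/(β+1))) ^ β)) :=
    goal1.rpow_const (Or.inr hβ0.le)
  have hlimval : (((β + 1):ℝ) ^ ((1:ℝ)/(β+1))) ^ β = (β + 1) ^ (β / (β + 1)) := by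
    rw [← Real.rpow_mul hp.le]
    congr 1
    field_simp
  rw [hlimval] at h3
  have hcomb := h1.mul h3
  rw [one_mul] at hcomb
  refine hcomb.congr' ?_
  filter_upwards [hsInv.eventually_gt_atTop 0, eventually_gt_atTop (0:ℝ)]
    with w hv hw
  have hwp : (0:ℝ) < w ^ ((1:ℝ)/(β+1)) := Real.rpow_pos_of_pos hw _
  have hvb : sInv w ^ (-β) * sInv w ^ β = 1 := by
    rw [← Real.rpow_add hv]; simp
  have hexp : (1:ℝ)/(β+1) * β = β/(β+1) := by ring
  rw [Real.mul_rpow hv.le (hΘpos _).le, Real.div_rpow hv.le hwp.le,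
    ← Real.rpow_mul hw.le, hexp]
  have hfin : sInv w ^ (-β) * Θ (sInv w) ^ (-β) * (sInv w ^ β / w ^ (β/(β+1)))
      = (sInv w ^ (-β) * sInv w ^ β) * (Θ (sInv w) ^ (-β) / w ^ (β/(β+1))) := by
    ring
  rw [hfin, hvb, one_mul]
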